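/- arXiv:2006.11192 — 3 statements merged into one kernel-verified Lean document; each statement's English description precedes it below -/
import Mathlib

section
/- Let A be an n×n real matrix and B an n×m real matrix. Suppose there exist a symmetric positive definite n×n real matrix Y and an m×n real matrix W such that A·Y + Y·Aᵀ + B·W + Wᵀ·Bᵀ is negative definite. Then with K = W·Y⁻¹, the closed-loop matrix A + B·K is Hurwitz. -/
open Matrix
open scoped Matrix

/-- A symmetric real matrix is negative definite if `xᵀ M x < 0` for all nonzero `x`. -/
def Matrix.NegDef {m : Type*} [Fintype m] (M : Matrix m m ℝ) : Prop :=
  M.IsSymm ∧ ∀ x : m → ℝ, x ≠ 0 → x ⬝ᵥ (M *ᵥ x) < 0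

/-- A real square matrix is Hurwitz if every eigenvalue of it, viewed as a complex
matrix, has strictly negative real part. -/
def IsHurwitz {n : ℕ} (A : Matrix (Fin n) (Fin n) ℝ) : Prop :=
  ∀ μ ∈ spectrum ℂ (A.map (Complex.ofReal : ℝ → ℂ)), μ.re < 0

/-- Feasibility of the stabilizability LMI yields a Hurwitz closed loop with `K = W Y⁻¹`. -/
theorem lmi_implies_hurwitz {n m : ℕ}
    (A : Matrix (Fin n) (Fin n) ℝ) (B : Matrix (Fin n) (Fin m) ℝ)
    (Y : Matrix (Fin n) (Fin n) ℝ) (W : Matrix (Fin m) (Fin n) ℝ)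
    (hY : Y.PosDef)
    (hLMI : (A * Y + Y * Aᵀ + B * W + Wᵀ * Bᵀ).NegDef) :
    IsHurwitz (A + B * (W * Y⁻¹)) := by
  intro μ hμ
  set M : Matrix (Fin n) (Fin n) ℝ := A + B * (W * Y⁻¹) with hM
  set N : Matrix (Fin n) (Fin n) ℝ := A * Y + Y * Aᵀ + B * W + Wᵀ * Bᵀ with hNdef
  -- basic facts about Y
  have hYdet : IsUnit Y.det := isUnit_iff_ne_zero.mpr (ne_of_gt hY.det_pos)
  have hYsymm : Yᵀ = Y := by
    have := hY.1
    simpa [Matrix.IsHermitian, Matrix.conjTranspose, Matrix.map, Matrix.transpose] using this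
  -- the closed-loop Lyapunov identity
  have hN : M * Y + Y * Mᵀ = N := by
    have h1 : M * Y = A * Y + B * W := by
      rw [hM, add_mul, Matrix.mul_assoc, Matrix.mul_assoc,
        Matrix.nonsing_inv_mul Y hYdet, Matrix.mul_one]
    have h2 : Y * Mᵀ = Y * Aᵀ + Wᵀ * Bᵀ := by
      rw [hM, Matrix.transpose_add, Matrix.mul_add, Matrix.transpose_mul,
        Matrix.transpose_mul, Matrix.transpose_nonsing_inv, hYsymm]
      rw [← Matrix.mul_assoc, ← Matrix.mul_assoc,
        Matrix.mul_nonsing_inv Y hYdet, Matrix.one_mul]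
    rw [h1, h2, hNdef]; abel
  -- get an eigenvector of Mᵀ over ℂ
  rw [spectrum.mem_iff] at hμ
  have hdet : (μ • (1 : Matrix (Fin n) (Fin n) ℂ) - M.map Complex.ofReal).det = 0 := by
    by_contra h
    exact hμ (by
      rw [Algebra.algebraMap_eq_smul_one, Matrix.isUnit_iff_isUnit_det]
      exact isUnit_iff_ne_zero.mpr h)
  have hdetT : (μ • (1 : Matrix (Fin n) (Fin n) ℂ) - (Mᵀ).map Complex.ofReal).det = 0 := by
    have : ((μ • (1 : Matrix (Fin n) (Fin n) ℂ) - M.map Complex.ofReal)ᵀ).det = 0 := by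
      rw [Matrix.det_transpose]; exact hdet
    rwa [Matrix.transpose_sub, Matrix.transpose_smul, Matrix.transpose_one,
      ← Matrix.transpose_map] at this
  obtain ⟨u, hu, huv⟩ := Matrix.exists_mulVec_eq_zero_iff.mpr hdetT
  have heig : (Mᵀ).map Complex.ofReal *ᵥ u = μ • u := by
    have := huv
    rw [Matrix.sub_mulVec, sub_eq_zero, Matrix.smul_mulVec, Matrix.one_mulVec] at this
    exact this.symm
  -- real and imaginary parts of the eigenvector
  set a : Fin n → ℝ := fun i => (u i).re with ha
  set b : Fin n → ℝ := fun i => (u i).im with hb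
  have heiga : Mᵀ *ᵥ a = μ.re • a - μ.im • b := by
    funext i
    have := congrFun heig i
    have hre := congrArg Complex.re this
    simpa [Matrix.mulVec, dotProduct, Complex.re_sum, ha, hb,
      Pi.sub_apply, Pi.smul_apply, smul_eq_mul, Complex.mul_re, mul_comm,
      Finset.sum_sub_distrib, sub_eq_add_neg] using hre
  have heigb : Mᵀ *ᵥ b = μ.im • a + μ.re • b := by
    funext i
    have := congrFun heig i
    have him := congrArg Complex.im this
    simpa [Matrix.mulVec, dotProduct, Complex.im_sum, ha, hb,
      Pi.add_apply, Pi.smul_apply, smul_eq_mul, Complex.mul_im, mul_comm, add_comm] using him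
  -- quadratic form identity
  have key : ∀ x : Fin n → ℝ, x ⬝ᵥ (N *ᵥ x) = 2 * ((Mᵀ *ᵥ x) ⬝ᵥ (Y *ᵥ x)) := by
    intro x
    rw [← hN, Matrix.add_mulVec, dotProduct_add]
    have h1 : x ⬝ᵥ ((M * Y) *ᵥ x) = (Mᵀ *ᵥ x) ⬝ᵥ (Y *ᵥ x) := by
      rw [← Matrix.mulVec_mulVec, Matrix.dotProduct_mulVec, ← Matrix.mulVec_transpose]
    have h2 : x ⬝ᵥ ((Y * Mᵀ) *ᵥ x) = (Mᵀ *ᵥ x) ⬝ᵥ (Y *ᵥ x) := by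
      rw [← Matrix.mulVec_mulVec, Matrix.dotProduct_mulVec, ← Matrix.mulVec_transpose,
        hYsymm, dotProduct_comm]
    rw [h1, h2]; ring
  -- Y is symmetric, so a ⬝ Y b = b ⬝ Y a
  have hsymmdot : a ⬝ᵥ (Y *ᵥ b) = b ⬝ᵥ (Y *ᵥ a) := by
    rw [Matrix.dotProduct_mulVec, ← Matrix.mulVec_transpose, hYsymm, dotProduct_comm]
  -- positivity / negativity of the quadratic forms
  have hposY : ∀ x : Fin n → ℝ, x ≠ 0 → 0 < x ⬝ᵥ (Y *ᵥ x) := by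
    intro x hx
    have := (Matrix.posDef_iff_dotProduct_mulVec.mp hY).2 hx
    simpa using this
  have hposY0 : ∀ x : Fin n → ℝ, 0 ≤ x ⬝ᵥ (Y *ᵥ x) := by
    intro x
    by_cases hx : x = 0
    · simp [hx]
    · exact le_of_lt (hposY x hx)
  have hnegN0 : ∀ x : Fin n → ℝ, x ⬝ᵥ (N *ᵥ x) ≤ 0 := by
    intro x
    by_cases hx : x = 0
    · simp [hx]
    · exact le_of_lt (hLMI.2 x hx)
  -- one of a, b is nonzero
  have hab : a ≠ 0 ∨ b ≠ 0 := by
    by_contra h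
    push_neg at h
    apply hu
    funext i
    have h1 := congrFun h.1 i
    have h2 := congrFun h.2 i
    exact Complex.ext (by simpa [ha] using h1) (by simpa [hb] using h2)
  -- combine
  have hsum : a ⬝ᵥ (N *ᵥ a) + b ⬝ᵥ (N *ᵥ b)
      = 2 * μ.re * (a ⬝ᵥ (Y *ᵥ a) + b ⬝ᵥ (Y *ᵥ b)) := by
    rw [key a, key b, heiga, heigb, sub_dotProduct, add_dotProduct,
      smul_dotProduct, smul_dotProduct, smul_dotProduct,
      smul_dotProduct, hsymmdot]
    simp only [smul_eq_mul]
    ring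
  have hq : 0 < a ⬝ᵥ (Y *ᵥ a) + b ⬝ᵥ (Y *ᵥ b) := by
    rcases hab with h | h
    · have := hposY a h
      have := hposY0 b
      linarith
    · have := hposY b h
      have := hposY0 a
      linarith
  have hlt : a ⬝ᵥ (N *ᵥ a) + b ⬝ᵥ (N *ᵥ b) < 0 := by
    rcases hab with h | h
    · have := hLMI.2 a h
      have := hnegN0 b
      linarith
    · have := hLMI.2 b h
      have := hnegN0 a
      linarith
  nlinarith [hsum, hq, hlt]
end

section
/- Let A be an n×n real matrix, B an n×m real matrix, and K an m×n real matrix such that A + B·K is Hurwitz. Then there exist a symmetric positive definite n×n real matrix Y and an m×n real matrix W with W = K·Y such that A·Y + Y·Aᵀ + B·W + Wᵀ·Bᵀ is negative definite. -/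
open Matrix
open scoped Matrix

open NormedSpace Filter MeasureTheory Set

attribute [local instance] Matrix.linftyOpNormedAddCommGroup Matrix.linftyOpNormedSpace
  Matrix.linftyOpNormedRing Matrix.linftyOpNormedAlgebra

noncomputable instance matNormTopology {m n α : Type*} [Fintype m] [Fintype n] [NormedAddCommGroup α] :
    TopologicalSpace (Matrix m n α) :=
  (Matrix.linftyOpNormedAddCommGroup (m := m) (n := n) (α := α)).toUniformSpace.toTopologicalSpace

lemma pow_exp_bdd (k : ℕ) {ε : ℝ} (hε : 0 < ε) :
    ∃ C : ℝ, ∀ t : ℝ, 0 ≤ t → t ^ k * Real.exp (-(ε * t)) ≤ C := by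
  have h : Tendsto (fun t : ℝ => t ^ k * Real.exp (-(ε * t))) atTop (nhds 0) := by
    have h1 := (Real.tendsto_pow_mul_exp_neg_atTop_nhds_zero k).comp
      (tendsto_id.const_mul_atTop hε)
    have h2 : (fun t : ℝ => (ε * t) ^ k * Real.exp (-(ε * t)))
        = (fun x : ℝ => x ^ k * Real.exp (-x)) ∘ (fun t => ε * t) := rfl
    have h3 : Tendsto (fun t : ℝ => (ε * t) ^ k * Real.exp (-(ε * t))) atTop (nhds 0) := by
      rw [h2]; exact h1
    have h4 := h3.const_mul ((ε ^ k)⁻¹)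
    rw [mul_zero] at h4
    refine h4.congr (fun t => ?_)
    field_simp [mul_pow]
    ring
  obtain ⟨T, hT⟩ := (h.eventually (eventually_le_nhds (by norm_num : (0:ℝ) < 1))).exists_forall_of_atTop
  obtain ⟨C, hC⟩ := (isCompact_Icc (a := (0:ℝ)) (b := T)).exists_bound_of_continuousOn
    (f := fun t : ℝ => t ^ k * Real.exp (-(ε * t))) (Continuous.continuousOn (by continuity))
  refine ⟨max C 1, fun t ht => ?_⟩
  rcases le_total t T with h1 | h1
  · exact le_trans (le_abs_self _) (le_trans (hC t ⟨ht, h1⟩) (le_max_left _ _))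
  · exact le_trans (hT t h1) (le_max_right _ _)


lemma decay_vec {n : ℕ} (Mc : Matrix (Fin n) (Fin n) ℂ) {ε : ℝ} (hε : 0 < ε)
    (hspec : ∀ μ ∈ spectrum ℂ Mc, μ.re ≤ -(2 * ε)) (v : Fin n → ℂ) :
    ∃ C : ℝ, ∀ t : ℝ, 0 ≤ t → ‖exp (t • Mc) *ᵥ v‖ ≤ C * Real.exp (-(ε * t)) := by
  classical
  set f : Module.End ℂ (Fin n → ℂ) := Matrix.toLinAlgEquiv' Mc with hf
  let V : Submodule ℂ (Fin n → ℂ) :=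
    { carrier := {w | ∃ C : ℝ, ∀ t : ℝ, 0 ≤ t →
        ‖exp (t • Mc) *ᵥ w‖ ≤ C * Real.exp (-(ε * t))}
      add_mem' := by
        rintro a b ⟨Ca, hCa⟩ ⟨Cb, hCb⟩
        refine ⟨Ca + Cb, fun t ht => ?_⟩
        rw [Matrix.mulVec_add]
        calc ‖exp (t • Mc) *ᵥ a + exp (t • Mc) *ᵥ b‖
            ≤ ‖exp (t • Mc) *ᵥ a‖ + ‖exp (t • Mc) *ᵥ b‖ := norm_add_le _ _
          _ ≤ Ca * Real.exp (-(ε * t)) + Cb * Real.exp (-(ε * t)) :=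
              add_le_add (hCa t ht) (hCb t ht)
          _ = (Ca + Cb) * Real.exp (-(ε * t)) := by ring
      zero_mem' := ⟨0, fun t ht => by simp⟩
      smul_mem' := by
        rintro c a ⟨Ca, hCa⟩
        refine ⟨‖c‖ * Ca, fun t ht => ?_⟩
        rw [Matrix.mulVec_smul, norm_smul, mul_assoc]
        exact mul_le_mul_of_nonneg_left (hCa t ht) (norm_nonneg c) }
  suffices hv : v ∈ V from hv
  have htop : ⨆ μ : ℂ, f.maxGenEigenspace μ = ⊤ := Module.End.iSup_maxGenEigenspace_eq_top f
  have hle : (⊤ : Submodule ℂ (Fin n → ℂ)) ≤ V := by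
    rw [← htop]
    refine iSup_le fun μ => fun w hw => ?_
    by_cases hw0 : w = 0
    · exact hw0 ▸ V.zero_mem
    obtain ⟨k, hk⟩ := (Module.End.mem_maxGenEigenspace f μ w).mp hw
    -- μ is in the spectrum
    have hμ : μ.re ≤ -(2 * ε) := by
      apply hspec
      rw [← AlgEquiv.spectrum_eq (Matrix.toLinAlgEquiv' (R := ℂ) (n := Fin n)) Mc]
      rw [← Module.End.hasEigenvalue_iff_mem_spectrum]
      refine Module.End.hasEigenvalue_of_hasGenEigenvalue (k := k) ?_
      refine Submodule.ne_bot_iff _ |>.mpr ⟨w, ?_, hw0⟩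
      rw [Module.End.genEigenspace_nat]
      exact LinearMap.mem_ker.mpr hk
    set N : Matrix (Fin n) (Fin n) ℂ := Mc - μ • 1 with hN
    have hNk : N ^ k *ᵥ w = 0 := by
      have h1 : (f - μ • 1) ^ k = Matrix.toLinAlgEquiv' (N ^ k) := by
        rw [map_pow, map_sub, _root_.map_smul, _root_.map_one]
      rw [h1] at hk
      rw [Matrix.toLinAlgEquiv'_apply] at hk
      exact hk
    have hNl : ∀ l, k ≤ l → N ^ l *ᵥ w = 0 := by
      intro l hl
      obtain ⟨j, rfl⟩ := Nat.exists_eq_add_of_le hl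
      rw [add_comm, pow_add, ← Matrix.mulVec_mulVec, hNk, Matrix.mulVec_zero]
    obtain ⟨Cb, hCb⟩ : ∃ Cb : ℕ → ℝ, ∀ l, ∀ t, 0 ≤ t →
        t ^ l * Real.exp (-(ε * t)) ≤ Cb l := by
      choose Cb hCb using fun l => pow_exp_bdd l hε
      exact ⟨Cb, hCb⟩
    refine ⟨∑ l ∈ Finset.range k, (l.factorial : ℝ)⁻¹ * ‖N ^ l *ᵥ w‖ * Cb l, fun t ht => ?_⟩
    -- decompose the exponential
    have hexp1 : ∀ c : ℂ, exp (c • (1 : Matrix (Fin n) (Fin n) ℂ))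
        = Complex.exp c • (1 : Matrix (Fin n) (Fin n) ℂ) := by
      intro c
      have halg : Continuous (algebraMap ℂ (Matrix (Fin n) (Fin n) ℂ)) :=
        continuous_algebraMap _ _
      have h2 := map_exp ((Algebra.ofId ℂ (Matrix (Fin n) (Fin n) ℂ)).restrictScalars ℝ)
        halg c
      simp only [AlgHom.coe_restrictScalars', Algebra.ofId_apply] at h2
      rw [Algebra.algebraMap_eq_smul_one, Algebra.algebraMap_eq_smul_one] at h2
      rw [← h2, ← Complex.exp_eq_exp_ℂ]
    have h1 : t • Mc = ((t : ℂ) * μ) • (1 : Matrix (Fin n) (Fin n) ℂ) + t • N := by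
      rw [hN, smul_sub]
      have : ((t : ℂ) * μ) • (1 : Matrix (Fin n) (Fin n) ℂ) = t • (μ • 1) := by
        rw [← smul_assoc, Complex.real_smul]
      rw [this]
      abel
    have hcomm : Commute (((t : ℂ) * μ) • (1 : Matrix (Fin n) (Fin n) ℂ)) (t • N) :=
      ((Commute.one_left (t • N)).smul_left _)
    have hsplit : exp (t • Mc) = Complex.exp ((t : ℂ) * μ) • exp (t • N) := by
      rw [h1, exp_add_of_commute hcomm, hexp1, smul_mul_assoc, one_mul]
    -- series for exp (t • N) applied to w
    have hmv : exp (t • N) *ᵥ w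
        = ∑ l ∈ Finset.range k, ((l.factorial : ℝ)⁻¹ * t ^ l) • (N ^ l *ᵥ w) := by
      let L : Matrix (Fin n) (Fin n) ℂ →ₗ[ℝ] (Fin n → ℂ) :=
        { toFun := fun P => P *ᵥ w
          map_add' := fun P Q => Matrix.add_mulVec P Q w
          map_smul' := fun r P => Matrix.smul_mulVec r P w }
      let Lc := LinearMap.toContinuousLinearMap L
      have hLc : ∀ P, Lc P = P *ᵥ w := fun P => rfl
      have hsum : Summable fun l : ℕ => (l.factorial : ℝ)⁻¹ • (t • N) ^ l :=
        expSeries_summable' (𝕂 := ℝ) (t • N)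
      calc exp (t • N) *ᵥ w = Lc (∑' l : ℕ, (l.factorial : ℝ)⁻¹ • (t • N) ^ l) := by
            rw [hLc, exp_eq_tsum ℝ]
        _ = ∑' l : ℕ, Lc ((l.factorial : ℝ)⁻¹ • (t • N) ^ l) := Lc.map_tsum hsum
        _ = ∑ l ∈ Finset.range k, Lc ((l.factorial : ℝ)⁻¹ • (t • N) ^ l) := by
            refine tsum_eq_sum ?_
            intro l hl
            have hkl : k ≤ l := by simpa using hl
            rw [hLc, smul_pow, ← smul_assoc, Matrix.smul_mulVec, hNl l hkl, smul_zero]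
        _ = ∑ l ∈ Finset.range k, ((l.factorial : ℝ)⁻¹ * t ^ l) • (N ^ l *ᵥ w) := by
            refine Finset.sum_congr rfl fun l _ => ?_
            rw [hLc, smul_pow, ← smul_assoc, Matrix.smul_mulVec, smul_eq_mul]
    rw [hsplit, Matrix.smul_mulVec, hmv, norm_smul]
    have hnorm : ‖Complex.exp ((t : ℂ) * μ)‖ = Real.exp (t * μ.re) := by
      rw [Complex.norm_exp]
      congr 1
      simp [Complex.mul_re]
    rw [hnorm]
    calc Real.exp (t * μ.re) * ‖∑ l ∈ Finset.range k,
          ((l.factorial : ℝ)⁻¹ * t ^ l) • (N ^ l *ᵥ w)‖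
        ≤ Real.exp (t * μ.re) * ∑ l ∈ Finset.range k,
            (l.factorial : ℝ)⁻¹ * t ^ l * ‖N ^ l *ᵥ w‖ := by
          refine mul_le_mul_of_nonneg_left ?_ (Real.exp_nonneg _)
          refine le_trans (norm_sum_le _ _) ?_
          refine Finset.sum_le_sum fun l _ => ?_
          rw [norm_smul]
          have : ‖(l.factorial : ℝ)⁻¹ * t ^ l‖ = (l.factorial : ℝ)⁻¹ * t ^ l := by
            rw [Real.norm_eq_abs, abs_of_nonneg]
            positivity
          rw [this]
      _ = ∑ l ∈ Finset.range k,
            (l.factorial : ℝ)⁻¹ * ‖N ^ l *ᵥ w‖ * (t ^ l * Real.exp (t * μ.re)) := by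
          rw [Finset.mul_sum]
          refine Finset.sum_congr rfl fun l _ => by ring
      _ ≤ ∑ l ∈ Finset.range k,
            (l.factorial : ℝ)⁻¹ * ‖N ^ l *ᵥ w‖ * (Cb l * Real.exp (-(ε * t))) := by
          refine Finset.sum_le_sum fun l _ => ?_
          refine mul_le_mul_of_nonneg_left ?_ (by positivity)
          calc t ^ l * Real.exp (t * μ.re)
              ≤ t ^ l * Real.exp (-(2 * ε) * t) := by
                refine mul_le_mul_of_nonneg_left ?_ (by positivity)
                exact Real.exp_le_exp.mpr (by nlinarith)
            _ = (t ^ l * Real.exp (-(ε * t))) * Real.exp (-(ε * t)) := by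
                rw [mul_assoc, ← Real.exp_add]; ring_nf
            _ ≤ Cb l * Real.exp (-(ε * t)) :=
                mul_le_mul_of_nonneg_right (hCb l t ht) (Real.exp_nonneg _)
      _ = (∑ l ∈ Finset.range k, (l.factorial : ℝ)⁻¹ * ‖N ^ l *ᵥ w‖ * Cb l)
            * Real.exp (-(ε * t)) := by
          rw [Finset.sum_mul]
          refine Finset.sum_congr rfl fun l _ => by ring
  exact hle trivial


lemma exp_map_complex {n : ℕ} (M : Matrix (Fin n) (Fin n) ℝ) (t : ℝ) :
    (exp (t • M)).map (Complex.ofReal) = exp (t • M.map Complex.ofReal) := by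
  let Φ : Matrix (Fin n) (Fin n) ℝ →ₐ[ℝ] Matrix (Fin n) (Fin n) ℂ :=
    Complex.ofRealAm.mapMatrix
  have hcont : Continuous Φ := by
    apply continuous_matrix
    intro i j
    exact Complex.continuous_ofReal.comp (continuous_apply_apply i j)
  have h := map_exp Φ hcont (t • M)
  simp only [Φ] at h
  simp only [AlgHom.mapMatrix_apply] at h
  rw [show (t • M).map Complex.ofRealAm = t • M.map Complex.ofReal by
    ext i j; simp [Matrix.map_apply]] at h
  rw [← h]
  rfl

lemma linfty_norm_le_sum {l m : Type*} [Fintype l] [Fintype m]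
    (A : Matrix l m ℝ) : ‖A‖ ≤ ∑ i, ∑ j, ‖A i j‖ := by
  rw [Matrix.linfty_opNorm_def]
  have h1 : (Finset.univ.sup fun i => ∑ j, ‖A i j‖₊) ≤ ∑ i, ∑ j, ‖A i j‖₊ :=
    Finset.sup_le fun i _ => Finset.single_le_sum (f := fun i => ∑ j, ‖A i j‖₊)
      (fun _ _ => zero_le) (Finset.mem_univ i)
  calc ((Finset.univ.sup fun i => ∑ j, ‖A i j‖₊ : NNReal) : ℝ)
      ≤ ((∑ i, ∑ j, ‖A i j‖₊ : NNReal) : ℝ) := by exact_mod_cast h1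
    _ = ∑ i, ∑ j, ‖A i j‖ := by push_cast; rfl

lemma decay_matrix {n : ℕ} (M : Matrix (Fin n) (Fin n) ℝ) {ε : ℝ} (hε : 0 < ε)
    (hspec : ∀ μ ∈ spectrum ℂ (M.map Complex.ofReal), μ.re ≤ -(2 * ε)) :
    ∃ C : ℝ, 0 < C ∧ ∀ t : ℝ, 0 ≤ t → ‖exp (t • M)‖ ≤ C * Real.exp (-(ε * t)) := by
  choose Cv hCv using fun j =>
    decay_vec (M.map Complex.ofReal) hε hspec (Pi.single j (1 : ℂ))
  have hCv0 : ∀ j, 0 ≤ Cv j := by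
    intro j
    have h := hCv j 0 le_rfl
    simp only [mul_zero, neg_zero, Real.exp_zero, mul_one] at h
    exact le_trans (norm_nonneg _) h
  have hentry : ∀ (t : ℝ), 0 ≤ t → ∀ i j, ‖exp (t • M) i j‖ ≤ Cv j * Real.exp (-(ε * t)) := by
    intro t ht i j
    have h1 : ((exp (t • M)).map Complex.ofReal) i j
        = exp (t • M.map Complex.ofReal) i j := by rw [exp_map_complex]
    have h2 : (exp (t • M.map Complex.ofReal) *ᵥ Pi.single j (1 : ℂ)) i
        = exp (t • M.map Complex.ofReal) i j := by
      simp [Matrix.mulVec, dotProduct, Pi.single_apply]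
    calc ‖exp (t • M) i j‖ = ‖((exp (t • M)).map Complex.ofReal) i j‖ := by
          simp [Matrix.map_apply]
      _ = ‖(exp (t • M.map Complex.ofReal) *ᵥ Pi.single j (1 : ℂ)) i‖ := by rw [h1, ← h2]
      _ ≤ ‖exp (t • M.map Complex.ofReal) *ᵥ Pi.single j (1 : ℂ)‖ :=
          norm_le_pi_norm _ i
      _ ≤ Cv j * Real.exp (-(ε * t)) := hCv j t ht
  have hsum0 : (0:ℝ) ≤ ∑ _i : Fin n, ∑ j : Fin n, Cv j :=
    Finset.sum_nonneg fun _ _ => Finset.sum_nonneg fun j _ => hCv0 j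
  refine ⟨(∑ _i : Fin n, ∑ j : Fin n, Cv j) + 1, by linarith, fun t ht => ?_⟩
  calc ‖exp (t • M)‖ ≤ ∑ i, ∑ j, ‖exp (t • M) i j‖ := linfty_norm_le_sum _
    _ ≤ ∑ _i : Fin n, ∑ j : Fin n, Cv j * Real.exp (-(ε * t)) :=
        Finset.sum_le_sum fun i _ => Finset.sum_le_sum fun j _ => hentry t ht i j
    _ = (∑ _i : Fin n, ∑ j : Fin n, Cv j) * Real.exp (-(ε * t)) := by
        simp only [← Finset.sum_mul]
    _ ≤ ((∑ _i : Fin n, ∑ j : Fin n, Cv j) + 1) * Real.exp (-(ε * t)) := by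
        nlinarith [Real.exp_pos (-(ε * t))]

lemma exists_eps {n : ℕ} (Mc : Matrix (Fin n) (Fin n) ℂ)
    (h : ∀ μ ∈ spectrum ℂ Mc, μ.re < 0) :
    ∃ ε : ℝ, 0 < ε ∧ ∀ μ ∈ spectrum ℂ Mc, μ.re ≤ -(2 * ε) := by
  have hfin : (spectrum ℂ Mc).Finite := Matrix.finite_spectrum Mc
  set s := hfin.toFinset.image Complex.re with hs
  by_cases hne : s.Nonempty
  · obtain ⟨μ, hμ, hμmax⟩ := Finset.mem_image.mp (s.max'_mem hne)
    rw [Set.Finite.mem_toFinset] at hμ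
    have hneg : s.max' hne < 0 := hμmax ▸ h μ hμ
    refine ⟨-(s.max' hne) / 2, by linarith, fun ν hν => ?_⟩
    have : ν.re ≤ s.max' hne :=
      Finset.le_max' _ _ (Finset.mem_image.mpr ⟨ν, Set.Finite.mem_toFinset hfin |>.mpr hν, rfl⟩)
    linarith
  · refine ⟨1, one_pos, fun μ hμ => absurd ⟨μ.re, ?_⟩ hne⟩
    exact Finset.mem_image.mpr ⟨μ, Set.Finite.mem_toFinset hfin |>.mpr hμ, rfl⟩


lemma linfty_entry_le {l m : Type*} [Fintype l] [Fintype m]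
    (A : Matrix l m ℝ) (i : l) (j : m) : ‖A i j‖ ≤ ‖A‖ := by
  rw [Matrix.linfty_opNorm_def]
  have h1 : ‖A i j‖₊ ≤ Finset.univ.sup fun i => ∑ j, ‖A i j‖₊ :=
    le_trans (Finset.single_le_sum (f := fun j => ‖A i j‖₊) (fun _ _ => zero_le)
      (Finset.mem_univ j)) (Finset.le_sup (f := fun i => ∑ j, ‖A i j‖₊) (Finset.mem_univ i))
  exact_mod_cast h1

lemma linfty_transpose_le {l m : Type*} [Fintype l] [Fintype m]
    (A : Matrix l m ℝ) : ‖Aᵀ‖ ≤ (Fintype.card l * Fintype.card m : ℕ) * ‖A‖ := by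
  calc ‖Aᵀ‖ ≤ ∑ i, ∑ j, ‖Aᵀ i j‖ := linfty_norm_le_sum _
    _ ≤ ∑ _i : m, ∑ _j : l, ‖A‖ := by
        refine Finset.sum_le_sum fun i _ => Finset.sum_le_sum fun j _ => ?_
        exact linfty_entry_le A j i
    _ = (Fintype.card m * Fintype.card l : ℕ) * ‖A‖ := by
        simp [Finset.sum_const, mul_assoc]
    _ = (Fintype.card l * Fintype.card m : ℕ) * ‖A‖ := by rw [Nat.mul_comm]

lemma lyapunov {n : ℕ} (M : Matrix (Fin n) (Fin n) ℝ)
    (hM : ∀ μ ∈ spectrum ℂ (M.map Complex.ofReal), μ.re < 0) :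
    ∃ Y : Matrix (Fin n) (Fin n) ℝ, Y.PosDef ∧ M * Y + Y * Mᵀ = -1 := by
  obtain ⟨ε, hε, hspec⟩ := exists_eps _ hM
  obtain ⟨C, hC, hdecay⟩ := decay_matrix M hε hspec
  set e : ℝ → Matrix (Fin n) (Fin n) ℝ := fun t => exp (t • M) with he
  set g : ℝ → Matrix (Fin n) (Fin n) ℝ := fun t => e t * (e t)ᵀ with hg
  set D : ℝ := C * ((Fintype.card (Fin n) * Fintype.card (Fin n) : ℕ) * C) with hD
  have hec : Continuous e := exp_continuous.comp (continuous_id.smul continuous_const)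
  have hgc : Continuous g := hec.mul hec.matrix_transpose
  have hgb : ∀ t : ℝ, 0 ≤ t → ‖g t‖ ≤ D * Real.exp (-(2 * ε) * t) := by
    intro t ht
    have h1 : ‖e t‖ ≤ C * Real.exp (-(ε * t)) := hdecay t ht
    have h2 : ‖(e t)ᵀ‖ ≤ (Fintype.card (Fin n) * Fintype.card (Fin n) : ℕ) * ‖e t‖ :=
      linfty_transpose_le _
    calc ‖g t‖ ≤ ‖e t‖ * ‖(e t)ᵀ‖ := norm_mul_le _ _
      _ ≤ (C * Real.exp (-(ε * t))) *
          ((Fintype.card (Fin n) * Fintype.card (Fin n) : ℕ) * (C * Real.exp (-(ε * t)))) := by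
          have h3 : ‖(e t)ᵀ‖ ≤ (Fintype.card (Fin n) * Fintype.card (Fin n) : ℕ) *
              (C * Real.exp (-(ε * t))) :=
            le_trans h2 (by
              refine mul_le_mul_of_nonneg_left h1 (by positivity))
          exact mul_le_mul h1 h3 (norm_nonneg _) (by positivity)
      _ = D * (Real.exp (-(ε * t)) * Real.exp (-(ε * t))) := by rw [hD]; ring
      _ = D * Real.exp (-(2 * ε) * t) := by rw [← Real.exp_add]; ring_nf
  -- integrability of g on Ioi 0
  have hgint : IntegrableOn g (Ioi 0) := by
    have hexp : IntegrableOn (fun t : ℝ => D * Real.exp (-(2 * ε) * t)) (Ioi 0) :=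
      (exp_neg_integrableOn_Ioi 0 (by linarith)).const_mul D
    refine Integrable.mono' hexp hgc.aestronglyMeasurable ?_
    filter_upwards [ae_restrict_mem measurableSet_Ioi] with t ht
    exact hgb t (le_of_lt ht)
  -- derivative of g
  have hder : ∀ t : ℝ, HasDerivAt g (M * g t + g t * Mᵀ) t := by
    intro t
    have h1 : HasDerivAt e (M * e t) t := hasDerivAt_exp_smul_const' M t
    have het : (fun u : ℝ => (e u)ᵀ) = fun u : ℝ => exp (u • Mᵀ) := by
      funext u
      rw [he]
      erw [← Matrix.transpose_smul, Matrix.exp_transpose]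
      rfl
    have h2 : HasDerivAt (fun u : ℝ => (e u)ᵀ) ((e t)ᵀ * Mᵀ) t := by
      rw [het]
      have := hasDerivAt_exp_smul_const (𝕂 := ℝ) Mᵀ t
      have hte : (e t)ᵀ = exp (t • Mᵀ) := by
        erw [he, ← Matrix.transpose_smul, Matrix.exp_transpose]
        rfl
      rw [hte]
      exact this
    have h3 := h1.mul h2
    refine h3.congr_deriv ?_
    simp only [hg, mul_assoc]
  -- tendsto 0
  have htend : Tendsto g atTop (nhds 0) := by
    have h1 : Tendsto (fun t : ℝ => -(2 * ε) * t) atTop atBot :=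
      tendsto_id.const_mul_atTop_of_neg (by linarith)
    have h2 := Real.tendsto_exp_atBot.comp h1
    have h3 := h2.const_mul D
    have h4 : Tendsto (fun t : ℝ => D * Real.exp (-(2 * ε) * t)) atTop (nhds 0) := by
      simpa [Function.comp] using h3
    refine squeeze_zero_norm' ?_ h4
    filter_upwards [eventually_ge_atTop (0 : ℝ)] with t ht
    exact hgb t ht
  -- the two continuous linear maps
  let L1 : Matrix (Fin n) (Fin n) ℝ →L[ℝ] Matrix (Fin n) (Fin n) ℝ :=
    LinearMap.toContinuousLinearMap (LinearMap.mulLeft ℝ M)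
  let L2 : Matrix (Fin n) (Fin n) ℝ →L[ℝ] Matrix (Fin n) (Fin n) ℝ :=
    LinearMap.toContinuousLinearMap (LinearMap.mulRight ℝ Mᵀ)
  have hL1 : ∀ P, L1 P = M * P := fun _ => rfl
  have hL2 : ∀ P, L2 P = P * Mᵀ := fun _ => rfl
  have hint1 : IntegrableOn (fun t => M * g t) (Ioi 0) := by
    have := L1.integrable_comp hgint
    simpa [hL1, IntegrableOn] using this
  have hint2 : IntegrableOn (fun t => g t * Mᵀ) (Ioi 0) := by
    have := L2.integrable_comp hgint
    simpa [hL2, IntegrableOn] using this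
  have hg'int : IntegrableOn (fun t => M * g t + g t * Mᵀ) (Ioi 0) := hint1.add hint2
  have hFTC : ∫ t in Ioi 0, (M * g t + g t * Mᵀ) = 0 - g 0 :=
    integral_Ioi_of_hasDerivAt_of_tendsto' (fun t _ => hder t) hg'int htend
  have hg0 : g 0 = 1 := by
    rw [hg, he]
    simp only [zero_smul, exp_zero, Matrix.transpose_one, mul_one]
  set Y : Matrix (Fin n) (Fin n) ℝ := ∫ t in Ioi 0, g t with hY
  have hsplit : M * Y + Y * Mᵀ = -1 := by
    have h1 : ∫ t in Ioi 0, (M * g t + g t * Mᵀ)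
        = (∫ t in Ioi 0, M * g t) + ∫ t in Ioi 0, g t * Mᵀ := integral_add hint1 hint2
    have h2 : ∫ t in Ioi 0, M * g t = M * Y := by
      have := L1.integral_comp_comm hgint
      simpa [hL1] using this
    have h3 : ∫ t in Ioi 0, g t * Mᵀ = Y * Mᵀ := by
      have := L2.integral_comp_comm hgint
      simpa [hL2] using this
    rw [← h2, ← h3, ← h1, hFTC, hg0, zero_sub]
  -- symmetry of Y
  have hYsymm : Yᵀ = Y := by
    let Lt : Matrix (Fin n) (Fin n) ℝ →ₗ[ℝ] Matrix (Fin n) (Fin n) ℝ :=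
      { toFun := fun P => Pᵀ
        map_add' := fun P Q => Matrix.transpose_add P Q
        map_smul' := fun r P => Matrix.transpose_smul r P }
    let Ltc := LinearMap.toContinuousLinearMap Lt
    have hLt : ∀ P, Ltc P = Pᵀ := fun _ => rfl
    have h1 : Yᵀ = ∫ t in Ioi 0, (g t)ᵀ := by
      have := Ltc.integral_comp_comm hgint
      simp only [hLt] at this
      rw [hY, ← this]
    rw [h1]
    congr 1
    funext t
    rw [hg, Matrix.transpose_mul, Matrix.transpose_transpose]
  -- positivity
  have hpos : ∀ x : Fin n → ℝ, x ≠ 0 → 0 < x ⬝ᵥ (Y *ᵥ x) := by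
    intro x hx
    let Lx : Matrix (Fin n) (Fin n) ℝ →ₗ[ℝ] ℝ :=
      { toFun := fun P => x ⬝ᵥ (P *ᵥ x)
        map_add' := fun P Q => by simp [Matrix.add_mulVec, dotProduct_add]
        map_smul' := fun r P => by simp [Matrix.smul_mulVec, dotProduct_smul] }
    let Lxc := LinearMap.toContinuousLinearMap Lx
    have hLx : ∀ P, Lxc P = x ⬝ᵥ (P *ᵥ x) := fun _ => rfl
    have h1 : x ⬝ᵥ (Y *ᵥ x) = ∫ t in Ioi 0, x ⬝ᵥ (g t *ᵥ x) := by
      have := Lxc.integral_comp_comm hgint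
      simp only [hLx] at this
      rw [hY, ← this]
    have hpt : ∀ t : ℝ, x ⬝ᵥ (g t *ᵥ x) = ((e t)ᵀ *ᵥ x) ⬝ᵥ ((e t)ᵀ *ᵥ x) := by
      intro t
      simp only [hg]
      rw [← Matrix.mulVec_mulVec, dotProduct_mulVec, ← Matrix.mulVec_transpose]
    have hq0 : 0 < x ⬝ᵥ (g 0 *ᵥ x) := by
      rw [hg0, Matrix.one_mulVec]
      obtain ⟨i, hi⟩ := Function.ne_iff.mp hx
      refine Finset.sum_pos' (fun j _ => mul_self_nonneg _) ⟨i, Finset.mem_univ i, ?_⟩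
      exact mul_self_pos.mpr hi
    have hqc : Continuous fun t => x ⬝ᵥ (g t *ᵥ x) := by
      have : (fun t => x ⬝ᵥ (g t *ᵥ x)) = fun t => Lxc (g t) := by
        funext t; rw [hLx]
      rw [this]
      exact Lxc.continuous.comp hgc
    have hev : ∀ᶠ t in nhds (0 : ℝ), 0 < x ⬝ᵥ (g t *ᵥ x) :=
      hqc.continuousAt.eventually (eventually_gt_nhds hq0)
    obtain ⟨δ, hδ, hball⟩ := Metric.eventually_nhds_iff.mp hev
    have hqint : IntegrableOn (fun t => x ⬝ᵥ (g t *ᵥ x)) (Ioi 0) := by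
      have := Lxc.integrable_comp hgint
      simpa [hLx, IntegrableOn] using this
    have hnn : 0 ≤ᵐ[volume.restrict (Ioi 0)] fun t => x ⬝ᵥ (g t *ᵥ x) := by
      refine Filter.Eventually.of_forall fun t => ?_
      show (0:ℝ) ≤ x ⬝ᵥ (g t *ᵥ x)
      rw [hpt t]
      exact Finset.sum_nonneg fun j _ => mul_self_nonneg _
    have hsupp : Ioo (0:ℝ) δ ⊆ Function.support (fun t => x ⬝ᵥ (g t *ᵥ x)) ∩ Ioi 0 := by
      intro t ht
      refine ⟨?_, ht.1⟩
      have hd : dist t 0 < δ := by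
        rw [Real.dist_eq, sub_zero, abs_of_pos ht.1]
        exact ht.2
      exact ne_of_gt (hball hd)
    have hμpos : 0 < volume (Function.support (fun t => x ⬝ᵥ (g t *ᵥ x)) ∩ Ioi 0) := by
      refine lt_of_lt_of_le ?_ (measure_mono hsupp)
      rw [Real.volume_Ioo, sub_zero]
      exact ENNReal.ofReal_pos.mpr hδ
    rw [h1]
    exact (setIntegral_pos_iff_support_of_nonneg_ae hnn hqint).mpr hμpos
  refine ⟨Y, ⟨?_, ?_⟩, hsplit⟩
  · show Yᴴ = Y
    rw [Matrix.conjTranspose_eq_transpose_of_trivial]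
    exact hYsymm
  · intro x hx
    have := hpos x (fun h => hx (Finsupp.coe_eq_zero.mp h))
    simpa [Finsupp.sum_fintype, dotProduct, mulVec, Finset.mul_sum, mul_assoc, mul_left_comm] using this


lemma dotProduct_self_pos {n : ℕ} {x : Fin n → ℝ} (hx : x ≠ 0) : 0 < x ⬝ᵥ x := by
  obtain ⟨i, hi⟩ := Function.ne_iff.mp hx
  exact Finset.sum_pos' (fun j _ => mul_self_nonneg _)
    ⟨i, Finset.mem_univ i, mul_self_pos.mpr hi⟩

/-- If `A + B K` is Hurwitz, the stabilizability LMI is feasible with `W = K Y`. -/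
theorem hurwitz_implies_lmi {n m : ℕ}
    (A : Matrix (Fin n) (Fin n) ℝ) (B : Matrix (Fin n) (Fin m) ℝ)
    (K : Matrix (Fin m) (Fin n) ℝ)
    (hK : IsHurwitz (A + B * K)) :
    ∃ (Y : Matrix (Fin n) (Fin n) ℝ) (W : Matrix (Fin m) (Fin n) ℝ),
      Y.PosDef ∧ W = K * Y ∧
      (A * Y + Y * Aᵀ + B * W + Wᵀ * Bᵀ).NegDef := by
  obtain ⟨Y, hYpos, hlyap⟩ := lyapunov (A + B * K) hK
  have hYsymm : Yᵀ = Y := by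
    have h := hYpos.isHermitian.eq
    rwa [Matrix.conjTranspose_eq_transpose_of_trivial] at h
  refine ⟨Y, K * Y, hYpos, rfl, ?_⟩
  have key : A * Y + Y * Aᵀ + B * (K * Y) + (K * Y)ᵀ * Bᵀ
      = (A + B * K) * Y + Y * (A + B * K)ᵀ := by
    rw [Matrix.transpose_mul, hYsymm, Matrix.add_mul, Matrix.transpose_add,
      Matrix.mul_add, Matrix.transpose_mul]
    rw [Matrix.mul_assoc, Matrix.mul_assoc]
    abel
  rw [key, hlyap]
  constructor
  · show (-1 : Matrix (Fin n) (Fin n) ℝ)ᵀ = -1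
    rw [Matrix.transpose_neg, Matrix.transpose_one]
  · intro x hx
    rw [Matrix.neg_mulVec, Matrix.one_mulVec, dotProduct_neg]
    exact neg_neg_of_pos (dotProduct_self_pos hx)
end

section
/- Let A be an n×n real matrix, B_u an n×m real matrix, Y a symmetric positive definite n×n real matrix, W an m×n real matrix, Q a symmetric positive semidefinite n×n real matrix, and R a symmetric positive semidefinite m×m real matrix. If the symmetric matrix A·Y + Y·Aᵀ + B_u·W + Wᵀ·B_uᵀ + Y·Q·Y + Wᵀ·R·W is negative definite, then the gain K = W·Y⁻¹ makes the closed-loop matrix A + B_u·K Hurwitz. -/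
open Matrix
open scoped Matrix

/-- Real part of the complexified quadratic form splits into real quadratic forms. -/
lemma re_quad_aux {n : ℕ} (M : Matrix (Fin n) (Fin n) ℝ) (v : Fin n → ℂ) :
    (star v ⬝ᵥ (M.map Complex.ofReal *ᵥ v)).re =
    (fun i => (v i).re) ⬝ᵥ (M *ᵥ fun i => (v i).re)
      + (fun i => (v i).im) ⬝ᵥ (M *ᵥ fun i => (v i).im) := by
  simp only [dotProduct, mulVec, Matrix.map_apply, Pi.star_apply, Finset.mul_sum,
    Complex.re_sum, ← Finset.sum_add_distrib]
  congr 1; ext j; congr 1; ext k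
  simp [Complex.mul_re]

/-- Lyapunov-type spectral bound: if `Y ≻ 0` and `Acl Y + Y Aclᵀ ≺ 0` (as a real quadratic
form), then every complex spectral value of `Acl` has negative real part. -/
lemma lyapunov_aux {n : ℕ}
    (Acl : Matrix (Fin n) (Fin n) ℝ) (Y S : Matrix (Fin n) (Fin n) ℝ)
    (hY : Y.PosDef)
    (hS : S = Acl * Y + Y * Aclᵀ)
    (hSneg : ∀ x : Fin n → ℝ, x ≠ 0 → x ⬝ᵥ (S *ᵥ x) < 0)
    (μ : ℂ) (hμ : μ ∈ spectrum ℂ (Acl.map (Complex.ofReal : ℝ → ℂ))) :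
    μ.re < 0 := by
  set Cc := Acl.map (Complex.ofReal : ℝ → ℂ) with hCc
  set Yc := Y.map (Complex.ofReal : ℝ → ℂ) with hYc
  -- eigenvector of the transpose
  obtain ⟨v, hv0, hv⟩ : ∃ v : Fin n → ℂ, v ≠ 0 ∧ Ccᵀ *ᵥ v = μ • v := by
    rw [spectrum.mem_iff] at hμ
    have hdet : (μ • (1 : Matrix (Fin n) (Fin n) ℂ) - Cc).det = 0 := by
      by_contra hne
      rw [Algebra.algebraMap_eq_smul_one] at hμ
      exact (hμ ((Matrix.isUnit_iff_isUnit_det _).2 (isUnit_iff_ne_zero.2 hne))).elim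
    have hdetT : (μ • (1 : Matrix (Fin n) (Fin n) ℂ) - Ccᵀ).det = 0 := by
      rw [← Matrix.det_transpose] at hdet
      simpa [Matrix.transpose_sub, Matrix.transpose_smul] using hdet
    obtain ⟨v, hv0, hv⟩ := (Matrix.exists_mulVec_eq_zero_iff).2 hdetT
    refine ⟨v, hv0, ?_⟩
    rw [Matrix.sub_mulVec, sub_eq_zero] at hv
    simpa [Matrix.smul_mulVec, Matrix.one_mulVec] using hv.symm
  -- complexified S
  have hScEq : S.map (Complex.ofReal : ℝ → ℂ) = Cc * Yc + Yc * Ccᵀ := by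
    rw [hS]
    ext i j
    simp only [Matrix.add_apply, Matrix.mul_apply, Matrix.map_apply, Matrix.transpose_apply,
      hCc, hYc]
    push_cast
    ring
  set q : ℂ := star v ⬝ᵥ (Yc *ᵥ v) with hq
  have hstar : Ccᵀ *ᵥ star v = star (Ccᵀ *ᵥ v) := by
    ext j
    simp [Matrix.mulVec, dotProduct, Matrix.map_apply, Matrix.transpose_apply, hCc]
  have hsval : star v ⬝ᵥ ((S.map (Complex.ofReal : ℝ → ℂ)) *ᵥ v)
      = ((starRingEnd ℂ) μ + μ) * q := by
    rw [hScEq, Matrix.add_mulVec, dotProduct_add, ← Matrix.mulVec_mulVec, ← Matrix.mulVec_mulVec]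
    have h2 : star v ⬝ᵥ (Yc *ᵥ (Ccᵀ *ᵥ v)) = μ * q := by
      rw [hv, Matrix.mulVec_smul, dotProduct_smul, smul_eq_mul, hq]
    have h1 : star v ⬝ᵥ (Cc *ᵥ (Yc *ᵥ v)) = (starRingEnd ℂ) μ * q := by
      rw [dotProduct_mulVec, ← Matrix.mulVec_transpose, hstar, hv]
      have : star (μ • v) = (starRingEnd ℂ) μ • star v := by
        ext j; simp [mul_comm]
      rw [this, smul_dotProduct, smul_eq_mul, hq]
    rw [h1, h2]; ring
  have hsre : (star v ⬝ᵥ ((S.map (Complex.ofReal : ℝ → ℂ)) *ᵥ v)).re < 0 := by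
    rw [re_quad_aux]
    set a : Fin n → ℝ := fun i => (v i).re with ha
    set b : Fin n → ℝ := fun i => (v i).im with hb
    have hab : a ≠ 0 ∨ b ≠ 0 := by
      by_contra hcon
      push_neg at hcon
      apply hv0
      ext i
      have h1 : a i = 0 := by rw [hcon.1]; rfl
      have h2 : b i = 0 := by rw [hcon.2]; rfl
      exact Complex.ext h1 h2
    have hle : ∀ x : Fin n → ℝ, x ⬝ᵥ (S *ᵥ x) ≤ 0 := by
      intro x
      by_cases hx : x = 0
      · simp [hx]
      · exact (hSneg x hx).le
    rcases hab with h | h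
    · have := hSneg a h; have := hle b; linarith
    · have := hSneg b h; have := hle a; linarith
  have hqre : 0 < q.re := by
    rw [hq, hYc, re_quad_aux]
    set a : Fin n → ℝ := fun i => (v i).re with ha
    set b : Fin n → ℝ := fun i => (v i).im with hb
    have hab : a ≠ 0 ∨ b ≠ 0 := by
      by_contra hcon
      push_neg at hcon
      apply hv0
      ext i
      have h1 : a i = 0 := by rw [hcon.1]; rfl
      have h2 : b i = 0 := by rw [hcon.2]; rfl
      exact Complex.ext h1 h2
    have hge : ∀ x : Fin n → ℝ, 0 ≤ x ⬝ᵥ (Y *ᵥ x) := fun x => by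
      simpa using hY.posSemidef.dotProduct_mulVec_nonneg x
    rcases hab with h | h
    · have h1 := hY.dotProduct_mulVec_pos h; rw [star_trivial] at h1; have := hge b; linarith
    · have h1 := hY.dotProduct_mulVec_pos h; rw [star_trivial] at h1; have := hge a; linarith
  rw [hsval] at hsre
  have hfinal : ((starRingEnd ℂ) μ + μ) = ((2 * μ.re : ℝ) : ℂ) := by
    apply Complex.ext <;> simp <;> ring
  rw [hfinal] at hsre
  simp only [Complex.mul_re, Complex.ofReal_re, Complex.ofReal_im, zero_mul, sub_zero] at hsre
  nlinarith

/-- Feasibility of the LQR LMI yields a stabilizing gain `K = W Y⁻¹`. -/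
theorem lqr_lmi_implies_hurwitz {n m : ℕ}
    (A : Matrix (Fin n) (Fin n) ℝ) (Bu : Matrix (Fin n) (Fin m) ℝ)
    (Y : Matrix (Fin n) (Fin n) ℝ) (W : Matrix (Fin m) (Fin n) ℝ)
    (Q : Matrix (Fin n) (Fin n) ℝ) (R : Matrix (Fin m) (Fin m) ℝ)
    (hY : Y.PosDef) (hQ : Q.PosSemidef) (hR : R.PosSemidef)
    (hLMI : (A * Y + Y * Aᵀ + Bu * W + Wᵀ * Buᵀ + Y * Q * Y + Wᵀ * R * W).NegDef) :
    IsHurwitz (A + Bu * (W * Y⁻¹)) := by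
  intro μ hμ
  set Acl := A + Bu * (W * Y⁻¹) with hAcl
  have hYunit : IsUnit Y.det := isUnit_iff_ne_zero.2 hY.det_pos.ne'
  have hclosed : Acl * Y = A * Y + Bu * W := by
    rw [hAcl, add_mul, Matrix.mul_assoc Bu (W * Y⁻¹) Y, Matrix.mul_assoc W Y⁻¹ Y,
      Matrix.nonsing_inv_mul Y hYunit, Matrix.mul_one]
  have hYH : Yᴴ = Y := hY.1
  have hYT : Yᵀ = Y := by
    have := hY.1
    rwa [Matrix.IsHermitian, conjTranspose_eq_transpose_of_trivial] at this
  set S := Acl * Y + Y * Aclᵀ with hS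
  have hSeq : S = (A * Y + Bu * W) + (Y * Aᵀ + Wᵀ * Buᵀ) := by
    have h2 : Y * Aclᵀ = (Acl * Y)ᵀ := by rw [Matrix.transpose_mul, hYT]
    rw [hS, h2, hclosed, Matrix.transpose_add, Matrix.transpose_mul, Matrix.transpose_mul, hYT]
  have hYQY : (Y * Q * Y).PosSemidef := by
    have := hQ.mul_mul_conjTranspose_same Y
    rwa [hYH] at this
  have hWRW : (Wᵀ * R * W).PosSemidef := by
    have := hR.conjTranspose_mul_mul_same W
    rwa [conjTranspose_eq_transpose_of_trivial] at this
  have hSneg : ∀ x : Fin n → ℝ, x ≠ 0 → x ⬝ᵥ (S *ᵥ x) < 0 := by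
    intro x hx
    have h1 := hLMI.2 x hx
    have h2 := hYQY.dotProduct_mulVec_nonneg x
    have h3 := hWRW.dotProduct_mulVec_nonneg x
    rw [star_trivial] at h2 h3
    have hdec : (A * Y + Y * Aᵀ + Bu * W + Wᵀ * Buᵀ + Y * Q * Y + Wᵀ * R * W)
        = S + (Y * Q * Y) + (Wᵀ * R * W) := by rw [hSeq]; abel
    rw [hdec] at h1
    simp only [Matrix.add_mulVec, dotProduct_add] at h1
    linarith
  exact lyapunov_aux Acl Y S hY hS hSneg μ hμ
end
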